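/- (Convergence of the nonlinear time scaling.) With f(t; α, γ, λ) = t + ξ - αγ W((ξ/(αγ))e^{(t+ξ)/(αγ)}), ξ = γ + λ - αγ > 0, γ > 0 fixed: f(t; α, γ, λ) → t locally uniformly on [0, ∞) as (α, λ) → (1, 0). Equivalently, h(t) = t - f(t) + γ + λ → γ locally uniformly, because (ξ/(αγ))e^{(t+ξ)/(αγ)} → 0 locally uniformly in t as (α,λ) → (1,0), W(0) = 0, and W is continuous at 0. -/

import Mathlib

open Real Set

set_option maxHeartbeats 1000000

/-- Convergence of the nonlinear time scaling: with
`f(t; α, γ, λ) = t + ξ - αγ W((ξ/(αγ))e^{(t+ξ)/(αγ)})`, `ξ = γ + λ - αγ > 0`,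
and `γ > 0` fixed, `f(t; α, γ, λ) → t` locally uniformly on `[0, ∞)` (i.e.
uniformly on `[0, T]` for every `T > 0`) as `(α, λ) → (1, 0)` within the
parameter region `0 < α ≤ 1`, `λ ≥ 0`, `γ + λ - αγ > 0`. -/
theorem stmt16 (γ : ℝ) (hγ : 0 < γ)
    (W : ℝ → ℝ) (hW0 : W 0 = 0) (hWc : ContinuousAt W 0)
    (hW1 : ∀ x : ℝ, -1 ≤ x → W (x * Real.exp x) = x) :
    ∀ T > (0 : ℝ), ∀ ε > (0 : ℝ), ∃ δ > (0 : ℝ),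
      ∀ α lam : ℝ, 0 < α → α ≤ 1 → 0 ≤ lam →
        |α - 1| < δ → |lam| < δ → 0 < γ + lam - α * γ →
        ∀ t ∈ Set.Icc (0 : ℝ) T,
          |(t + (γ + lam - α * γ) -
            α * γ * W ((γ + lam - α * γ) / (α * γ) *
              Real.exp ((t + (γ + lam - α * γ)) / (α * γ)))) - t| < ε := by
  intro T hT ε hε
  obtain ⟨η, hη, hWη⟩ := Metric.continuousAt_iff.mp hWc (ε / (2 * γ)) (by positivity)
  set C := Real.exp (2 * (T + 1) / γ) with hC
  have hCpos : 0 < C := hC ▸ Real.exp_pos _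
  clear_value C
  set δ : ℝ := min (1/2) (min (1/(γ+1)) (min (ε/(2*(γ+1))) (η*γ/(2*(γ+1)*C)))) with hδ
  have hδpos : 0 < δ := by rw [hδ]; positivity
  clear_value δ
  refine ⟨δ, hδpos, ?_⟩
  intro α lam hα0 hα1 hlam hαδ hlamδ hξpos t ht
  set ξ := γ + lam - α * γ with hξdef
  clear_value ξ
  have hδle1 : δ ≤ 1/2 := by rw [hδ]; exact min_le_left _ _
  have hδle2 : δ ≤ 1/(γ+1) := by rw [hδ]; exact le_trans (min_le_right _ _) (min_le_left _ _)
  have hδle3 : δ ≤ ε/(2*(γ+1)) := by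
    rw [hδ]; exact le_trans (min_le_right _ _) (le_trans (min_le_right _ _) (min_le_left _ _))
  have hδle4 : δ ≤ η*γ/(2*(γ+1)*C) := by
    rw [hδ]; exact le_trans (min_le_right _ _) (le_trans (min_le_right _ _) (min_le_right _ _))
  have hα12 : 1/2 < α := by
    have := abs_lt.mp hαδ
    linarith [this.1, this.2]
  have hαγ : γ/2 < α * γ := by nlinarith
  have hαγpos : 0 < α * γ := by positivity
  -- bound on ξ
  have hαabs := (abs_lt.mp hαδ).1
  have hlamabs := (abs_lt.mp hlamδ).2
  have hξub : ξ < (γ+1) * δ := by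
    have : γ * (1 - α) < γ * δ := by
      apply mul_lt_mul_of_pos_left _ hγ
      linarith
    rw [hξdef]; nlinarith
  have hξ1 : ξ ≤ 1 := by
    have : (γ+1) * δ ≤ 1 := by
      have := mul_le_mul_of_nonneg_left hδle2 (by linarith : (0:ℝ) ≤ γ+1)
      rwa [mul_one_div, div_self (by linarith : γ+1 ≠ 0)] at this
    linarith
  have hξε : ξ < ε/2 := by
    have : (γ+1) * δ ≤ ε/2 := by
      have := mul_le_mul_of_nonneg_left hδle3 (by linarith : (0:ℝ) ≤ γ+1)
      calc (γ+1) * δ ≤ (γ+1) * (ε/(2*(γ+1))) := this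
        _ = ε/2 := by field_simp
    linarith
  have hξη : ξ < η * γ / (2 * C) := by
    have : (γ+1) * δ ≤ η * γ / (2 * C) := by
      calc (γ+1) * δ ≤ (γ+1) * (η*γ/(2*(γ+1)*C)) :=
            mul_le_mul_of_nonneg_left hδle4 (by linarith)
        _ = η * γ / (2 * C) := by field_simp
    linarith
  -- bound on x
  set x := ξ / (α * γ) * Real.exp ((t + ξ) / (α * γ)) with hx
  have htT := ht.2
  have ht0 := ht.1
  have hxpos : 0 < x := by rw [hx]; positivity
  clear_value x
  have hexp_le : Real.exp ((t + ξ) / (α * γ)) ≤ C := by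
    rw [hC]
    apply Real.exp_le_exp.mpr
    rw [div_le_div_iff₀ hαγpos hγ]
    nlinarith
  have hxlt : x < η := by
    have h1 : ξ / (α * γ) < 2 * ξ / γ := by
      rw [div_lt_div_iff₀ hαγpos hγ]
      nlinarith
    have h2 : x ≤ ξ / (α * γ) * C := by
      rw [hx]
      exact mul_le_mul_of_nonneg_left hexp_le (by positivity)
    have h3 : ξ / (α * γ) * C < (2 * ξ / γ) * C :=
      mul_lt_mul_of_pos_right h1 hCpos
    have h4 : (2 * ξ / γ) * C < η := by
      have h5 : ξ * (2 * C) < η * γ :=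
        (lt_div_iff₀ (by positivity : (0:ℝ) < 2 * C)).mp hξη
      have h6 : (2 * ξ / γ) * C = ξ * (2 * C) / γ := by ring
      rw [h6, div_lt_iff₀ hγ]
      exact h5
    linarith
  have hWx : |W x| < ε / (2 * γ) := by
    have := hWη (show dist x 0 < η by
      rw [Real.dist_eq, sub_zero, abs_of_pos hxpos]; exact hxlt)
    rwa [Real.dist_eq, hW0, sub_zero] at this
  have hfin : |ξ - α * γ * W x| < ε := by
    have h1 : |α * γ * W x| ≤ γ * |W x| := by
      rw [abs_mul, abs_of_pos hαγpos]
      apply mul_le_mul_of_nonneg_right _ (abs_nonneg _)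
      calc α * γ ≤ 1 * γ := mul_le_mul_of_nonneg_right hα1 hγ.le
        _ = γ := one_mul γ
    have h2 : γ * |W x| < γ * (ε / (2 * γ)) :=
      mul_lt_mul_of_pos_left hWx hγ
    have h3 : γ * (ε / (2 * γ)) = ε / 2 := by field_simp
    calc |ξ - α * γ * W x| ≤ |ξ| + |α * γ * W x| := abs_sub ξ (α * γ * W x)
      _ = ξ + |α * γ * W x| := by rw [abs_of_pos hξpos]
      _ < ε/2 + ε/2 := by linarith
      _ = ε := by ring
  calc |(t + ξ - α * γ * W x) - t| = |ξ - α * γ * W x| := by ring_nf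
    _ < ε := hfin
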